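/- Let α₂ ∈ L¹(Ω) ∩ W^{−1,p'}(Ω) with α₂ ≥ 0. Then lim_{k→∞} ‖χ_{{α₂ ≥ k}} α₂‖_{W^{−1,p'}(Ω)} = 0. -/

import Mathlib

open MeasureTheory Filter Topology Set
open scoped ContDiff

noncomputable section

/-- The `W^{-1,p'}(Ω)` norm of a locally integrable function `f`, defined by duality
against smooth functions with compact support in `Ω`, normalized by `‖∇v‖_p ≤ 1`. -/
def dualNorm {N : ℕ} (p : ℝ) (Ω : Set (EuclideanSpace ℝ (Fin N)))
    (f : EuclideanSpace ℝ (Fin N) → ℝ) : ℝ :=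
  sSup {r : ℝ | ∃ v : EuclideanSpace ℝ (Fin N) → ℝ,
    ContDiff ℝ (⊤ : ℕ∞) v ∧ HasCompactSupport v ∧ tsupport v ⊆ Ω ∧
    (∫ x in Ω, ‖gradient v x‖ ^ p) ≤ 1 ∧ r = ∫ x in Ω, f x * v x}

namespace DNTZ
set_option linter.unusedSectionVars false
set_option linter.unusedVariables false
set_option maxHeartbeats 1000000


/-- derivative profile of the smooth ramp -/
def tr (δ t : ℝ) : ℝ := Real.smoothTransition ((t - δ)/δ)

/-- smooth ramp: vanishes for `t ≤ δ`, has slope in `[0,1]`, `≥ t - 2δ`. -/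
def ramp (δ : ℝ) (t : ℝ) : ℝ := ∫ s in (0:ℝ)..t, tr δ s

variable {δ t : ℝ}

lemma tr_nonneg : 0 ≤ tr δ t := Real.smoothTransition.nonneg _
lemma tr_le_one : tr δ t ≤ 1 := Real.smoothTransition.le_one _
lemma tr_contDiff : ContDiff ℝ (⊤ : ℕ∞) (tr δ) :=
  Real.smoothTransition.contDiff.comp ((contDiff_id.sub contDiff_const).div_const _)
lemma tr_continuous : Continuous (tr δ) := tr_contDiff.continuous
lemma tr_eq_zero (hδ : 0 < δ) (h : t ≤ δ) : tr δ t = 0 :=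
  Real.smoothTransition.zero_of_nonpos (by
    apply div_nonpos_of_nonpos_of_nonneg <;> linarith)
lemma tr_eq_one (hδ : 0 < δ) (h : 2*δ ≤ t) : tr δ t = 1 :=
  Real.smoothTransition.one_of_one_le (by
    rw [le_div_iff₀ hδ]; linarith)

lemma ramp_hasDerivAt : HasDerivAt (ramp δ) (tr δ t) t := by
  refine intervalIntegral.integral_hasDerivAt_right
    (tr_continuous.intervalIntegrable _ _)
    (tr_continuous.stronglyMeasurableAtFilter _ _) tr_continuous.continuousAt

lemma ramp_contDiff : ContDiff ℝ (⊤ : ℕ∞) (ramp δ) := by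
  have hd : deriv (ramp δ) = tr δ := funext fun t => (ramp_hasDerivAt (t := t)).deriv
  have : ContDiff ℝ (∞ : WithTop ℕ∞) (ramp δ) := by
    rw [contDiff_infty_iff_deriv]
    exact ⟨fun t => (ramp_hasDerivAt (t := t)).differentiableAt, by rw [hd]; exact tr_contDiff⟩
  exact this

lemma ramp_eq_zero (hδ : 0 < δ) (h : t ≤ δ) : ramp δ t = 0 := by
  have : EqOn (tr δ) (fun _ => (0:ℝ)) (uIcc 0 t) := by
    intro s hs
    refine tr_eq_zero hδ ?_
    rcases le_total 0 t with h' | h'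
    · rw [uIcc_of_le h'] at hs; exact le_trans hs.2 h
    · rw [uIcc_of_ge h'] at hs; exact le_trans hs.2 (le_of_lt hδ)
  rw [ramp, intervalIntegral.integral_congr this]
  simp

lemma ramp_nonneg (hδ : 0 < δ) : 0 ≤ ramp δ t := by
  rcases le_total t 0 with h | h
  · rw [ramp_eq_zero hδ (le_trans h hδ.le)]
  · exact intervalIntegral.integral_nonneg h (fun s _ => tr_nonneg)

lemma ramp_le_max (hδ : 0 < δ) : ramp δ t ≤ max t 0 := by
  rcases le_total t 0 with h | h
  · rw [ramp_eq_zero hδ (le_trans h hδ.le)]; exact le_max_right _ _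
  · calc ramp δ t ≤ ∫ _ in (0:ℝ)..t, (1:ℝ) := by
          apply intervalIntegral.integral_mono_on h
            (tr_continuous.intervalIntegrable _ _) (intervalIntegrable_const)
          exact fun s _ => tr_le_one
      _ = t := by simp
      _ ≤ max t 0 := le_max_left _ _

lemma ramp_ge (hδ : 0 < δ) : max t 0 - 2*δ ≤ ramp δ t := by
  rcases le_total t (2*δ) with h | h
  · have : max t 0 - 2*δ ≤ 0 := by
      rcases le_total t 0 with h' | h' <;> simp [max_eq_left, max_eq_right, h', h] <;> linarith
    linarith [ramp_nonneg (t := t) hδ]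
  · have h0 : (0:ℝ) ≤ 2*δ := by linarith
    have hsplit : ramp δ t = (∫ s in (0:ℝ)..(2*δ), tr δ s) + ∫ s in (2*δ)..t, tr δ s := by
      rw [ramp, ← intervalIntegral.integral_add_adjacent_intervals
        (tr_continuous.intervalIntegrable _ _) (tr_continuous.intervalIntegrable _ _)]
    have h1 : (0:ℝ) ≤ ∫ s in (0:ℝ)..(2*δ), tr δ s :=
      intervalIntegral.integral_nonneg h0 (fun s _ => tr_nonneg)
    have h2 : (∫ s in (2*δ)..t, tr δ s) = t - 2*δ := by
      have : EqOn (tr δ) (fun _ => (1:ℝ)) (uIcc (2*δ) t) := by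
        intro s hs; rw [uIcc_of_le h] at hs; exact tr_eq_one hδ hs.1
      rw [intervalIntegral.integral_congr this]; simp
    have : max t 0 = t := max_eq_left (by linarith)
    rw [this, hsplit, h2]; linarith


variable {F : Type*} [NormedAddCommGroup F] [InnerProductSpace ℝ F] [CompleteSpace F]

section W

variable (p δ σ : ℝ) (J : ℕ) (v : ℕ → F → ℝ)

def Tfun (x : F) : ℝ := ∑ i ∈ Finset.range J, (ramp δ (v i x) + σ) ^ p

def Wfun (x : F) : ℝ := Tfun p δ σ J v x ^ (1/p) - ((J:ℝ) * σ ^ p) ^ (1/p)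

variable {p δ σ J v}
variable (hp : 1 < p) (hδ : 0 < δ) (hσ : 0 < σ) (hJ : 1 ≤ J)
  (hv : ∀ i, ContDiff ℝ (⊤ : ℕ∞) (v i))

include hp hδ hσ

lemma rpow_rpow_inv' {a : ℝ} (ha : 0 ≤ a) : (a ^ p) ^ (1/p) = a := by
  rw [← Real.rpow_mul ha, mul_one_div_cancel (by positivity : p ≠ 0), Real.rpow_one]

lemma const_term_eq : ((J:ℝ) * σ ^ p) ^ (1/p) = (J:ℝ) ^ (1/p) * σ := by
  rw [Real.mul_rpow (by positivity) (by positivity), rpow_rpow_inv' hp hδ hσ hσ.le]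

lemma Tfun_ge : ∀ x, (J:ℝ) * σ ^ p ≤ Tfun p δ σ J v x := by
  intro x
  have h : ∀ i ∈ Finset.range J, σ ^ p ≤ (ramp δ (v i x) + σ) ^ p := by
    intro i _
    exact Real.rpow_le_rpow hσ.le (by linarith [ramp_nonneg (δ := δ) (t := v i x) hδ])
      (by positivity)
  calc (J:ℝ) * σ ^ p = ∑ _i ∈ Finset.range J, σ ^ p := by
        simp [Finset.sum_const, mul_comm]
    _ ≤ _ := Finset.sum_le_sum h

include hJ in
lemma Tfun_pos : ∀ x, 0 < Tfun p δ σ J v x := by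
  intro x
  refine lt_of_lt_of_le ?_ (Tfun_ge (J := J) (v := v) hp hδ hσ x)
  have : (0:ℝ) < J := by exact_mod_cast hJ
  positivity

include hJ in
lemma Wfun_nonneg : ∀ x, 0 ≤ Wfun p δ σ J v x := by
  intro x
  have h := Tfun_ge (J := J) (v := v) hp hδ hσ x
  have h2 : ((J:ℝ) * σ ^ p) ^ (1/p) ≤ Tfun p δ σ J v x ^ (1/p) :=
    Real.rpow_le_rpow (by positivity) h (by positivity)
  rw [Wfun]; linarith

include hJ in
lemma ramp_le_Wfun {i : ℕ} (hi : i < J) :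
    ∀ x, ramp δ (v i x) ≤ Wfun p δ σ J v x + (J:ℝ) ^ (1/p) * σ := by
  intro x
  have hr := ramp_nonneg (δ := δ) (t := v i x) hδ
  have hbase : (0:ℝ) ≤ ramp δ (v i x) + σ := by linarith
  have h1 : (ramp δ (v i x) + σ) ^ p ≤ Tfun p δ σ J v x := by
    refine Finset.single_le_sum (f := fun j => (ramp δ (v j x) + σ) ^ p) ?_
      (Finset.mem_range.2 hi)
    intro j _
    have := ramp_nonneg (δ := δ) (t := v j x) hδ
    positivity
  have h2 : ((ramp δ (v i x) + σ) ^ p) ^ (1/p) ≤ Tfun p δ σ J v x ^ (1/p) :=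
    Real.rpow_le_rpow (by positivity) h1 (by positivity)
  rw [rpow_rpow_inv' hp hδ hσ hbase] at h2
  have := const_term_eq (J := J) hp hδ hσ
  simp only [Wfun]; linarith

lemma Wfun_eq_zero {x : F} (h : ∀ i < J, v i x = 0) : Wfun p δ σ J v x = 0 := by
  have : Tfun p δ σ J v x = (J:ℝ) * σ ^ p := by
    rw [Tfun]
    have : ∀ i ∈ Finset.range J, (ramp δ (v i x) + σ) ^ p = σ ^ p := by
      intro i hi
      rw [h i (Finset.mem_range.1 hi), ramp_eq_zero hδ hδ.le, zero_add]
    rw [Finset.sum_congr rfl this]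
    simp [mul_comm]
  simp [Wfun, this]

include hv hJ in
lemma Wfun_contDiff : ContDiff ℝ (⊤ : ℕ∞) (Wfun p δ σ J v) := by
  rw [contDiff_iff_contDiffAt]
  intro x
  have hT : ContDiffAt ℝ (⊤ : ℕ∞) (Tfun p δ σ J v) x := by
    apply ContDiffAt.sum
    intro i _
    have hbase : ContDiffAt ℝ (⊤ : ℕ∞) (fun y => ramp δ (v i y) + σ) x :=
      ((ramp_contDiff.comp (hv i)).contDiffAt).add contDiffAt_const
    have hpos : ramp δ (v i x) + σ ≠ 0 := by
      have := ramp_nonneg (δ := δ) (t := v i x) hδ; positivity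
    exact (Real.contDiffAt_rpow_const_of_ne hpos).comp x hbase
  have hTpos : Tfun p δ σ J v x ≠ 0 := (Tfun_pos hp hδ hσ hJ x).ne'
  exact ((Real.contDiffAt_rpow_const_of_ne hTpos).comp x hT).sub contDiffAt_const

include hv hJ in
lemma Wfun_fderiv_bound :
    ∀ x, ‖fderiv ℝ (Wfun p δ σ J v) x‖ ^ p ≤
      ∑ i ∈ Finset.range J, ‖fderiv ℝ (v i) x‖ ^ p := by
  intro x
  -- the pieces
  set a : ℕ → ℝ := fun i => ramp δ (v i x) + σ with ha
  have hapos : ∀ i, 0 < a i := fun i => by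
    have := ramp_nonneg (δ := δ) (t := v i x) hδ; positivity
  set L : ℕ → F →L[ℝ] ℝ := fun i => fderiv ℝ (v i) x with hL
  -- derivative of each summand
  have hsum : ∀ i, HasFDerivAt (fun y => (ramp δ (v i y) + σ) ^ p)
      ((p * a i ^ (p-1) * tr δ (v i x)) • L i) x := by
    intro i
    have h1 : HasFDerivAt (v i) (L i) x :=
      ((hv i).differentiable (by simp)).differentiableAt.hasFDerivAt
    have h2 : HasFDerivAt (fun y => ramp δ (v i y) + σ) (tr δ (v i x) • L i) x :=
      ((ramp_hasDerivAt (δ := δ) (t := v i x)).comp_hasFDerivAt x h1).add_const σ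
    have h3 : HasDerivAt (fun t : ℝ => t ^ p) (p * a i ^ (p-1)) (a i) := by
      have := Real.hasDerivAt_rpow_const (x := a i) (p := p) (Or.inl (hapos i).ne')
      simpa [mul_comm] using this
    have := h3.comp_hasFDerivAt x h2
    simpa [smul_smul, mul_comm, mul_assoc, Function.comp_def] using this
  have hT : HasFDerivAt (Tfun p δ σ J v)
      (∑ i ∈ Finset.range J, (p * a i ^ (p-1) * tr δ (v i x)) • L i) x :=
    HasFDerivAt.fun_sum (fun i _ => hsum i)
  set T := Tfun p δ σ J v x with hTdef
  have hTpos : 0 < T := Tfun_pos hp hδ hσ hJ x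
  have h4 : HasDerivAt (fun t : ℝ => t ^ (1/p)) ((1/p) * T ^ (1/p - 1)) T := by
    have := Real.hasDerivAt_rpow_const (x := T) (p := 1/p) (Or.inl hTpos.ne')
    simpa [mul_comm] using this
  have hW : HasFDerivAt (Wfun p δ σ J v)
      (((1/p) * T ^ (1/p - 1)) • (∑ i ∈ Finset.range J, (p * a i ^ (p-1) * tr δ (v i x)) • L i))
      x := (h4.comp_hasFDerivAt x hT).sub_const _
  -- now the norm estimate
  set c : ℕ → ℝ := fun i => tr δ (v i x) * ‖L i‖ with hc
  have hcn : ∀ i, 0 ≤ c i := fun i => mul_nonneg tr_nonneg (norm_nonneg _)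
  have hnorm1 : ‖∑ i ∈ Finset.range J, (p * a i ^ (p-1) * tr δ (v i x)) • L i‖ ≤
      p * ∑ i ∈ Finset.range J, a i ^ (p-1) * c i := by
    refine le_trans (norm_sum_le _ _) ?_
    rw [Finset.mul_sum]
    apply Finset.sum_le_sum
    intro i _
    refine le_trans (norm_smul_le (p * a i ^ (p-1) * tr δ (v i x)) (L i)) ?_
    have h5 : |p * a i ^ (p-1) * tr δ (v i x)| = p * a i ^ (p-1) * tr δ (v i x) := by
      apply abs_of_nonneg
      have h6 := (hapos i).le
      have h7 := tr_nonneg (δ := δ) (t := v i x)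
      have hp0 : (0:ℝ) < p := by linarith
      positivity
    rw [Real.norm_eq_abs, h5, hc]
    apply le_of_eq; ring
  -- Hölder
  have hq : (p/(p-1)).HolderConjugate p := ((Real.holderConjugate_iff_eq_conjExponent hp).2 rfl).symm
  have holder : ∑ i ∈ Finset.range J, a i ^ (p-1) * c i ≤
      T ^ (1/(p/(p-1))) * (∑ i ∈ Finset.range J, c i ^ p) ^ (1/p) := by
    have h6 := Real.inner_le_Lp_mul_Lq_of_nonneg (Finset.range J)
      (f := fun i => a i ^ (p-1)) (g := c) hq
      (fun i _ => Real.rpow_nonneg (hapos i).le _) (fun i _ => hcn i)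
    have h7 : ∀ i, (a i ^ (p-1)) ^ (p/(p-1)) = a i ^ p := by
      intro i
      rw [← Real.rpow_mul (hapos i).le]
      congr 1
      have hp1 : p - 1 ≠ 0 := by linarith
      field_simp
    calc ∑ i ∈ Finset.range J, a i ^ (p-1) * c i ≤
        (∑ i ∈ Finset.range J, (a i ^ (p-1)) ^ (p/(p-1))) ^ (1/(p/(p-1))) *
          (∑ i ∈ Finset.range J, c i ^ p) ^ (1/p) := h6
      _ = _ := by
          congr 2
          · exact Finset.sum_congr rfl (fun i _ => h7 i)
  -- combine
  set Sx := ∑ i ∈ Finset.range J, c i ^ p with hSx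
  have hSnn : 0 ≤ Sx := Finset.sum_nonneg (fun i _ => Real.rpow_nonneg (hcn i) p)
  have hq' : 1/(p/(p-1)) = 1 - 1/p := by
    rw [one_div_div]; field_simp
  have hbound : ‖fderiv ℝ (Wfun p δ σ J v) x‖ ≤ Sx ^ (1/p) := by
    rw [hW.fderiv]
    refine le_trans (norm_smul_le (β := F →L[ℝ] ℝ) (1/p * T ^ (1/p - 1)) _) ?_
    have h8 : |1/p * T ^ (1/p - 1)| = 1/p * T ^ (1/p - 1) := by
      apply abs_of_nonneg
      have hp0 : (0:ℝ) < p := by linarith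
      positivity
    rw [Real.norm_eq_abs, h8]
    calc 1/p * T ^ (1/p-1) * ‖∑ i ∈ Finset.range J, (p * a i ^ (p-1) * tr δ (v i x)) • L i‖
        ≤ 1/p * T ^ (1/p-1) * (p * ∑ i ∈ Finset.range J, a i ^ (p-1) * c i) := by
          have hp0 : (0:ℝ) < p := by linarith
          apply mul_le_mul_of_nonneg_left hnorm1
          exact mul_nonneg (by positivity) (Real.rpow_nonneg hTpos.le _)
      _ ≤ 1/p * T ^ (1/p-1) * (p * (T ^ (1/(p/(p-1))) * Sx ^ (1/p))) := by
          have hp0 : (0:ℝ) < p := by linarith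
          apply mul_le_mul_of_nonneg_left _
            (mul_nonneg (by positivity) (Real.rpow_nonneg hTpos.le _))
          exact mul_le_mul_of_nonneg_left holder hp0.le
      _ = T ^ (1/p - 1) * T ^ (1 - 1/p) * Sx ^ (1/p) := by
          rw [hq']
          have hp0 : (0:ℝ) ≠ p := by intro h; linarith
          field_simp
      _ = Sx ^ (1/p) := by
          rw [← Real.rpow_add hTpos]
          norm_num
  have h9 : ‖fderiv ℝ (Wfun p δ σ J v) x‖ ^ p ≤ (Sx ^ (1/p)) ^ p :=
    Real.rpow_le_rpow (norm_nonneg _) hbound (by positivity)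
  have h10 : (Sx ^ (1/p)) ^ p = Sx := by
    rw [← Real.rpow_mul hSnn, one_div, inv_mul_cancel₀ (by positivity : p ≠ 0), Real.rpow_one]
  refine le_trans h9 (le_trans (le_of_eq h10) ?_)
  apply Finset.sum_le_sum
  intro i _
  refine Real.rpow_le_rpow (hcn i) ?_ (by positivity)
  calc c i = tr δ (v i x) * ‖L i‖ := rfl
    _ ≤ 1 * ‖L i‖ := mul_le_mul_of_nonneg_right tr_le_one (norm_nonneg _)
    _ = ‖L i‖ := one_mul _

end W


variable {X : Type*} [MeasurableSpace X] {μ : Measure X} {α₂ : X → ℝ}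

/-- truncation tail of `α₂` at level `k` -/
def Ft (α₂ : X → ℝ) (k : ℝ) (x : X) : ℝ := if k ≤ α₂ x then α₂ x else 0

lemma Ft_eq (α₂ : X → ℝ) (k : ℝ) (x : X) :
    (if k ≤ α₂ x then α₂ x else 0) = Ft α₂ k x := rfl

variable (hpos : ∀ x, 0 ≤ α₂ x) (hL1 : Integrable α₂ μ)

include hpos in
lemma Ft_nonneg {k : ℝ} {x : X} : 0 ≤ Ft α₂ k x := by
  rw [Ft]; split <;> simp [hpos x]

include hpos in
lemma Ft_le {k : ℝ} {x : X} : Ft α₂ k x ≤ α₂ x := by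
  rw [Ft]; split <;> simp [hpos x]

include hpos in
lemma Ft_mono {K k : ℝ} (h : K ≤ k) {x : X} : Ft α₂ k x ≤ Ft α₂ K x := by
  rw [Ft, Ft]
  by_cases h1 : k ≤ α₂ x
  · rw [if_pos h1, if_pos (le_trans h h1)]
  · rw [if_neg h1]; split <;> simp [hpos x]

include hL1 in
lemma Ft_aesm {k : ℝ} : AEStronglyMeasurable (Ft α₂ k) μ := by
  have h := hL1.aestronglyMeasurable
  set β := h.mk α₂ with hβ
  have hm : StronglyMeasurable β := h.stronglyMeasurable_mk
  have heq : α₂ =ᵐ[μ] β := h.ae_eq_mk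
  have hm2 : StronglyMeasurable (fun x => if k ≤ β x then β x else 0) := by
    apply Measurable.stronglyMeasurable
    exact Measurable.ite (measurableSet_le measurable_const hm.measurable)
      hm.measurable measurable_const
  refine hm2.aestronglyMeasurable.congr ?_
  filter_upwards [heq] with x hx
  simp only [Ft, hx]

include hpos hL1 in
lemma Ft_int {k : ℝ} : Integrable (Ft α₂ k) μ := by
  refine hL1.mono' (Ft_aesm hL1) ?_
  filter_upwards with x
  rw [Real.norm_eq_abs, abs_of_nonneg (Ft_nonneg hpos)]
  exact Ft_le hpos

include hpos hL1 in
lemma Ft_mul_int {k : ℝ} {g : X → ℝ} (hg : AEStronglyMeasurable g μ) {C : ℝ}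
    (hC : ∀ x, |g x| ≤ C) : Integrable (fun x => Ft α₂ k x * g x) μ := by
  refine ((hL1.const_mul C).mono' ((Ft_aesm hL1).mul hg) ?_ : Integrable (fun x => Ft α₂ k x * g x) μ)
  filter_upwards with x
  rw [Real.norm_eq_abs, abs_mul, abs_of_nonneg (Ft_nonneg hpos)]
  calc Ft α₂ k x * |g x| ≤ α₂ x * C := by
        apply mul_le_mul (Ft_le hpos) (hC x) (abs_nonneg _) (hpos x)
    _ = C * α₂ x := mul_comm _ _

include hpos hL1 in
lemma Ft_integral_nonneg {k : ℝ} : 0 ≤ ∫ x, Ft α₂ k x ∂μ :=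
  integral_nonneg (fun x => Ft_nonneg hpos)

include hpos hL1 in
lemma Ft_integral_le {k : ℝ} : (∫ x, Ft α₂ k x ∂μ) ≤ ∫ x, α₂ x ∂μ :=
  integral_mono (Ft_int hpos hL1) hL1 (fun x => Ft_le hpos)

include hpos hL1 in
lemma Ft_tail : Tendsto (fun k => ∫ x, Ft α₂ k x ∂μ) atTop (nhds 0) := by
  have h0 : (0:ℝ) = ∫ x, (0:ℝ) ∂μ := by simp
  rw [h0]
  apply tendsto_integral_filter_of_dominated_convergence (bound := α₂)
  · exact Eventually.of_forall (fun k => Ft_aesm hL1)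
  · refine Eventually.of_forall (fun k => ?_)
    filter_upwards with x
    rw [Real.norm_eq_abs, abs_of_nonneg (Ft_nonneg hpos)]
    exact Ft_le hpos
  · exact hL1
  · filter_upwards with x
    have : ∀ᶠ k in (atTop : Filter ℝ), Ft α₂ k x = 0 := by
      filter_upwards [eventually_gt_atTop (α₂ x)] with k hk
      rw [Ft, if_neg (not_le.2 hk)]
    exact Tendsto.congr' (by filter_upwards [this] with k hk; exact hk.symm) tendsto_const_nhds


lemma norm_gradient_eq (f : F → ℝ) (x : F) : ‖gradient f x‖ = ‖fderiv ℝ f x‖ :=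
  (InnerProductSpace.toDual ℝ F).symm.norm_map (fderiv ℝ f x)

/-- the zero function is admissible -/
lemma zero_admissible [MeasureSpace F] {p : ℝ} (hp : 1 < p) (Ω : Set F) :
    ContDiff ℝ (⊤ : ℕ∞) (fun _ : F => (0:ℝ)) ∧ HasCompactSupport (fun _ : F => (0:ℝ)) ∧
      tsupport (fun _ : F => (0:ℝ)) ⊆ Ω ∧
      (∫ x in Ω, ‖gradient (fun _ : F => (0:ℝ)) x‖ ^ p) ≤ 1 := by
  have hts : tsupport (fun _ : F => (0:ℝ)) = ∅ := by
    rw [tsupport]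
    have : (Function.support fun _ : F => (0:ℝ)) = ∅ := Function.support_eq_empty_iff.2 rfl
    rw [this, closure_empty]
  refine ⟨contDiff_const, ?_, by simp [hts], ?_⟩
  · rw [HasCompactSupport, hts]; exact isCompact_empty
  · have : ∀ x : F, ‖gradient (fun _ : F => (0:ℝ)) x‖ ^ p = 0 := by
      intro x
      rw [norm_gradient_eq, fderiv_fun_const]
      simp only [Pi.zero_apply, norm_zero]
      exact Real.zero_rpow (by positivity)
    rw [show (fun x : F => ‖gradient (fun _ : F => (0:ℝ)) x‖ ^ p) = fun _ => (0:ℝ) from funext this]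
    simp

theorem main_bound {N : ℕ} {p : ℝ} (hp : 1 < p) {Ω : Set (EuclideanSpace ℝ (Fin N))}
    {α₂ : EuclideanSpace ℝ (Fin N) → ℝ} (hpos : ∀ x, 0 ≤ α₂ x)
    (hL1 : Integrable α₂ (volume.restrict Ω)) {M : ℝ}
    (hM : ∀ v : EuclideanSpace ℝ (Fin N) → ℝ, ContDiff ℝ (⊤:ℕ∞) v → HasCompactSupport v →
      tsupport v ⊆ Ω → (∫ x in Ω, ‖gradient v x‖ ^ p) ≤ 1 → (∫ x in Ω, α₂ x * v x) ≤ M)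
    {ε : ℝ} (hε : 0 < ε) :
    ∃ K : ℝ, ∀ v : EuclideanSpace ℝ (Fin N) → ℝ, ContDiff ℝ (⊤:ℕ∞) v → HasCompactSupport v →
      tsupport v ⊆ Ω → (∫ x in Ω, ‖gradient v x‖ ^ p) ≤ 1 →
      (∫ x in Ω, (if K ≤ α₂ x then α₂ x else 0) * max (v x) 0) ≤ ε := by
  by_contra hcon
  push_neg at hcon
  simp only [Ft_eq] at hcon
  have hp0 : (0:ℝ) < p := by linarith
  have hA0 : (0:ℝ) ≤ ∫ x in Ω, α₂ x := integral_nonneg (fun x => hpos x)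
  set A := ∫ x in Ω, α₂ x with hAdef
  set δ := ε / (8*(A+1)) with hδdef
  have hδ : 0 < δ := by rw [hδdef]; positivity
  have hM0 : 0 ≤ M := by
    obtain ⟨h1, h2, h3, h4⟩ := zero_admissible (F := EuclideanSpace ℝ (Fin N)) hp Ω
    have := hM _ h1 h2 h3 h4
    simpa using this
  -- choice of J
  have hexp : 0 < 1 - 1/p := by
    have : 1/p < 1 := by rw [div_lt_one hp0]; exact hp
    linarith
  obtain ⟨J, hJbig, hJ1⟩ : ∃ J : ℕ, 2*(M + ε/8 + 1)/ε < (J:ℝ)^(1-1/p) ∧ 1 ≤ J := by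
    have ht : Tendsto (fun n:ℕ => (n:ℝ)^(1-1/p)) atTop atTop :=
      (tendsto_rpow_atTop hexp).comp tendsto_natCast_atTop_atTop
    obtain ⟨J, h⟩ := ((ht.eventually_gt_atTop (2*(M + ε/8 + 1)/ε)).and
      (eventually_ge_atTop 1)).exists
    exact ⟨J, h.1, h.2⟩
  have hJR : (1:ℝ) ≤ (J:ℝ) := by exact_mod_cast hJ1
  have hJ0 : (0:ℝ) < (J:ℝ) := by linarith
  have hJp1 : (1:ℝ) ≤ (J:ℝ)^(1/p) := Real.one_le_rpow hJR (by positivity)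
  have hJppos : (0:ℝ) < (J:ℝ)^(1/p) := by linarith
  set σ := δ / (J:ℝ)^(1/p) with hσdef
  have hσ : 0 < σ := div_pos hδ hJppos
  have hc₀ : (J:ℝ)^(1/p) * σ = δ := by
    rw [hσdef, mul_div_cancel₀ _ hJppos.ne']
  -- choice functions
  choose vK hvK1 hvK2 hvK3 hvK4 hvK5 using hcon
  have hbnd : ∀ K : ℝ, ∃ R : ℝ, 0 ≤ R ∧ ∀ x, |vK K x| ≤ R := by
    intro K
    obtain ⟨C, hC⟩ := (hvK2 K).exists_bound_of_continuous (hvK1 K).continuous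
    exact ⟨max C 0, le_max_right _ _, fun x => le_trans (hC x) (le_max_left _ _)⟩
  choose RK hRK0 hRKb using hbnd
  -- tail choice
  have htail := Ft_tail (μ := volume.restrict Ω) hpos hL1
  have htc : ∀ c : ℝ, ∃ K₀ : ℝ, 0 < c → ∀ k, K₀ ≤ k → (∫ x in Ω, Ft α₂ k x) ≤ c := by
    intro c
    by_cases hc : 0 < c
    · have hev : ∀ᶠ k in (atTop : Filter ℝ), (∫ x in Ω, Ft α₂ k x) < c :=
        htail.eventually_lt_const hc
      obtain ⟨K₀, hK₀⟩ := eventually_atTop.1 hev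
      exact ⟨K₀, fun _ k hk => (hK₀ k hk).le⟩
    · exact ⟨0, fun h => absurd h hc⟩
  choose tK htK using htc
  -- the recursion
  set K : ℕ → ℝ := fun i => Nat.rec 0 (fun _ Ki => max (Ki + 1) (tK (ε/(4*(RK Ki + 1))))) i
    with hKdef
  have hKsucc : ∀ i, K (i+1) = max (K i + 1) (tK (ε/(4*(RK (K i) + 1)))) := fun i => rfl
  have hKle : ∀ i, K i ≤ K (i+1) := by
    intro i; rw [hKsucc]; exact le_trans (by linarith) (le_max_left _ _)
  have hKtail : ∀ i, (∫ x in Ω, Ft α₂ (K (i+1)) x) ≤ ε/(4*(RK (K i) + 1)) := by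
    intro i
    refine htK _ (div_pos hε (by have := hRK0 (K i); nlinarith)) _ ?_
    rw [hKsucc]; exact le_max_right _ _
  -- per-index notation
  set g : ℕ → EuclideanSpace ℝ (Fin N) → ℝ := fun i x => ramp δ (vK (K i) x) with hgdef
  have hg_nonneg : ∀ i x, 0 ≤ g i x := fun i x => ramp_nonneg hδ
  have hg_le : ∀ i x, g i x ≤ max (vK (K i) x) 0 := fun i x => ramp_le_max hδ
  have hg_bd : ∀ i x, |g i x| ≤ RK (K i) := by
    intro i x
    rw [abs_of_nonneg (hg_nonneg i x)]
    refine le_trans (hg_le i x) ?_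
    rcases le_total (vK (K i) x) 0 with h | h
    · rw [max_eq_right h]; exact hRK0 _
    · rw [max_eq_left h]; exact le_trans (le_abs_self _) (hRKb _ x)
  have hg_cont : ∀ i, Continuous (g i) :=
    fun i => ramp_contDiff.continuous.comp (hvK1 (K i)).continuous
  -- integrability of the products
  have hint_g : ∀ i k, Integrable (fun x => Ft α₂ k x * g i x) (volume.restrict Ω) :=
    fun i k => Ft_mul_int hpos hL1 (hg_cont i).aestronglyMeasurable (hg_bd i)
  have hint_max : ∀ i k, Integrable (fun x => Ft α₂ k x * max (vK (K i) x) 0)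
      (volume.restrict Ω) := by
    intro i k
    refine Ft_mul_int hpos hL1 (((hvK1 (K i)).continuous.max continuous_const).aestronglyMeasurable)
      (C := RK (K i)) (fun x => ?_)
    rcases le_total (vK (K i) x) 0 with h | h
    · rw [max_eq_right h, abs_zero]; exact hRK0 _
    · rw [max_eq_left h, abs_of_nonneg h]
      exact le_trans (le_abs_self _) (hRKb _ x)
  -- E1 : lower bound at level K i
  have hE1 : ∀ i, 3*ε/4 ≤ ∫ x in Ω, Ft α₂ (K i) x * g i x := by
    intro i
    have h5 := hvK5 (K i)
    have hpw : ∀ x, Ft α₂ (K i) x * max (vK (K i) x) 0 ≤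
        Ft α₂ (K i) x * g i x + (2*δ) * Ft α₂ (K i) x := by
      intro x
      have h6 := ramp_ge (δ := δ) (t := vK (K i) x) hδ
      have h7 : (0:ℝ) ≤ Ft α₂ (K i) x := Ft_nonneg hpos
      have h8 : max (vK (K i) x) 0 ≤ g i x + 2*δ := by rw [hgdef]; simpa using h6
      nlinarith [mul_le_mul_of_nonneg_left h8 h7]
    have hint3 : Integrable (fun x => (2*δ) * Ft α₂ (K i) x) (volume.restrict Ω) :=
      (Ft_int hpos hL1).const_mul _
    have h9 : (∫ x in Ω, Ft α₂ (K i) x * max (vK (K i) x) 0) ≤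
        ∫ x in Ω, (Ft α₂ (K i) x * g i x + (2*δ) * Ft α₂ (K i) x) :=
      integral_mono (hint_max i (K i)) ((hint_g i (K i)).add hint3) hpw
    have h9' : (∫ x in Ω, (Ft α₂ (K i) x * g i x + (2*δ) * Ft α₂ (K i) x)) =
        (∫ x in Ω, Ft α₂ (K i) x * g i x) + (2*δ) * ∫ x in Ω, Ft α₂ (K i) x := by
      rw [integral_add (hint_g i (K i)) hint3, integral_const_mul]
    rw [h9'] at h9
    have h10 : (∫ x in Ω, Ft α₂ (K i) x) ≤ A := Ft_integral_le hpos hL1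
    have h11 : (0:ℝ) ≤ ∫ x in Ω, Ft α₂ (K i) x := Ft_integral_nonneg hpos hL1
    have h12 : 2*δ*(∫ x in Ω, Ft α₂ (K i) x) ≤ ε/4 := by
      have : 2*δ*(∫ x in Ω, Ft α₂ (K i) x) ≤ 2*δ*A := by nlinarith
      refine le_trans this ?_
      have hA1 : A + 1 ≠ 0 := by linarith
      have h14 : 2*δ*(A+1) = ε/4 := by rw [hδdef]; field_simp; ring
      nlinarith
    linarith
  -- E2 : upper bound at level K (i+1)
  have hE2 : ∀ i, (∫ x in Ω, Ft α₂ (K (i+1)) x * g i x) ≤ ε/4 := by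
    intro i
    have hpw : ∀ x, Ft α₂ (K (i+1)) x * g i x ≤ RK (K i) * Ft α₂ (K (i+1)) x := by
      intro x
      have h7 : (0:ℝ) ≤ Ft α₂ (K (i+1)) x := Ft_nonneg hpos
      have h8 : g i x ≤ RK (K i) := le_trans (le_abs_self _) (hg_bd i x)
      nlinarith
    have h9 : (∫ x in Ω, Ft α₂ (K (i+1)) x * g i x) ≤
        ∫ x in Ω, RK (K i) * Ft α₂ (K (i+1)) x :=
      integral_mono (hint_g i (K (i+1))) ((Ft_int hpos hL1).const_mul _) hpw
    rw [integral_const_mul] at h9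
    refine le_trans h9 ?_
    have h10 := hKtail i
    have h11 : (0:ℝ) ≤ ∫ x in Ω, Ft α₂ (K (i+1)) x := Ft_integral_nonneg hpos hL1
    have hR := hRK0 (K i)
    have h12 : RK (K i) * (∫ x in Ω, Ft α₂ (K (i+1)) x) ≤ RK (K i) * (ε/(4*(RK (K i) + 1))) := by
      nlinarith
    refine le_trans h12 ?_
    have hR1 : RK (K i) + 1 ≠ 0 := by nlinarith
    have h15 : 0 ≤ ε/(4*(RK (K i)+1)) := le_of_lt (div_pos hε (by nlinarith))
    have h14 : (RK (K i)+1) * (ε/(4*(RK (K i) + 1))) = ε/4 := by field_simp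
    nlinarith
  -- the combined test function W
  set W : EuclideanSpace ℝ (Fin N) → ℝ := Wfun p δ σ J (fun i => vK (K i)) with hWdef
  have hvs : ∀ i, ContDiff ℝ (⊤ : ℕ∞) (vK (K i)) := fun i => hvK1 _
  have hWc : ContDiff ℝ (⊤ : ℕ∞) W := Wfun_contDiff hp hδ hσ hJ1 hvs
  have hWnn : ∀ x, 0 ≤ W x := Wfun_nonneg hp hδ hσ hJ1
  -- support of W
  have hSclosed : IsClosed (⋃ i ∈ Finset.range J, tsupport (vK (K i))) :=
    (Finset.range J).finite_toSet.isClosed_biUnion (fun i _ => isClosed_tsupport _)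
  have hScompact : IsCompact (⋃ i ∈ Finset.range J, tsupport (vK (K i))) :=
    (Finset.range J).finite_toSet.isCompact_biUnion (fun i _ => hvK2 _)
  have hWsupp : tsupport W ⊆ ⋃ i ∈ Finset.range J, tsupport (vK (K i)) := by
    refine closure_minimal ?_ hSclosed
    intro x hx
    by_contra hxS
    apply hx
    refine Wfun_eq_zero hp hδ hσ (fun i hi => ?_)
    have : x ∉ tsupport (vK (K i)) := by
      intro hmem
      exact hxS (Set.mem_biUnion (Finset.mem_range.2 hi) hmem)
    exact image_eq_zero_of_notMem_tsupport this
  have hWcs : HasCompactSupport W :=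
    IsCompact.of_isClosed_subset hScompact (isClosed_tsupport _) hWsupp
  have hWΩ : tsupport W ⊆ Ω := by
    refine subset_trans hWsupp ?_
    refine Set.iUnion₂_subset (fun i _ => hvK3 _)
  obtain ⟨CW, hCW⟩ := hWcs.exists_bound_of_continuous hWc.continuous
  -- gradient bound for W
  have hWgradpt : ∀ x, ‖gradient W x‖ ^ p ≤
      ∑ i ∈ Finset.range J, ‖fderiv ℝ (vK (K i)) x‖ ^ p := by
    intro x
    rw [norm_gradient_eq]
    exact Wfun_fderiv_bound hp hδ hσ hJ1 hvs x
  have hint_fd : ∀ v : EuclideanSpace ℝ (Fin N) → ℝ, ContDiff ℝ (⊤ : ℕ∞) v →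
      HasCompactSupport v →
      Integrable (fun x => ‖fderiv ℝ v x‖ ^ p) (volume.restrict Ω) := by
    intro v hv hvc
    have hcont : Continuous (fun x => ‖fderiv ℝ v x‖ ^ p) :=
      (hv.continuous_fderiv (by simp)).norm.rpow_const (fun x => Or.inr hp0.le)
    have hsupp : HasCompactSupport (fun x => ‖fderiv ℝ v x‖ ^ p) := by
      refine (hvc.fderiv (𝕜 := ℝ)).comp_left (g := fun y : _ →L[ℝ] ℝ => ‖y‖ ^ p) ?_
      simp [Real.zero_rpow hp0.ne']
    exact (hcont.integrable_of_hasCompactSupport hsupp).integrableOn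
  have hWgrad : (∫ x in Ω, ‖gradient W x‖ ^ p) ≤ (J:ℝ) := by
    have heqW : (fun x : EuclideanSpace ℝ (Fin N) => ‖gradient W x‖ ^ p) =
        fun x => ‖fderiv ℝ W x‖ ^ p := funext (fun x => by rw [norm_gradient_eq])
    have h1 : (∫ x in Ω, ‖gradient W x‖ ^ p) ≤
        ∫ x in Ω, (∑ i ∈ Finset.range J, ‖fderiv ℝ (vK (K i)) x‖ ^ p) := by
      refine integral_mono ?_ ?_ hWgradpt
      · rw [heqW]; exact hint_fd W hWc hWcs
      · exact integrable_finset_sum _ (fun i _ => hint_fd _ (hvs i) (hvK2 _))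
    have h2 : (∫ x in Ω, (∑ i ∈ Finset.range J, ‖fderiv ℝ (vK (K i)) x‖ ^ p)) =
        ∑ i ∈ Finset.range J, ∫ x in Ω, ‖fderiv ℝ (vK (K i)) x‖ ^ p :=
      integral_finset_sum _ (fun i _ => hint_fd _ (hvs i) (hvK2 _))
    have h3 : ∀ i ∈ Finset.range J, (∫ x in Ω, ‖fderiv ℝ (vK (K i)) x‖ ^ p) ≤ 1 := by
      intro i _
      have heqv : (fun x : EuclideanSpace ℝ (Fin N) => ‖fderiv ℝ (vK (K i)) x‖ ^ p) =
          fun x => ‖gradient (vK (K i)) x‖ ^ p := funext (fun x => by rw [norm_gradient_eq])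
      rw [heqv]
      exact hvK4 _
    calc (∫ x in Ω, ‖gradient W x‖ ^ p) ≤ _ := h1
      _ = _ := h2
      _ ≤ ∑ _i ∈ Finset.range J, (1:ℝ) := Finset.sum_le_sum h3
      _ = (J:ℝ) := by simp
  -- apply the dual bound to the normalized W
  have hIaW : (∫ x in Ω, α₂ x * W x) ≤ M * (J:ℝ)^(1/p) := by
    set c : ℝ := (J:ℝ)^(-(1/p)) with hcdef
    have hcpos : 0 < c := Real.rpow_pos_of_pos hJ0 _
    have hcp : c ^ p = (J:ℝ)⁻¹ := by
      rw [hcdef, ← Real.rpow_mul hJ0.le]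
      have hexp2 : (-(1/p))*p = -1 := by field_simp
      rw [hexp2, Real.rpow_neg_one]
    have hWdiff : Differentiable ℝ W := hWc.differentiable (by simp)
    have hu1 : ContDiff ℝ (⊤ : ℕ∞) (fun x => c * W x) := contDiff_const.mul hWc
    have hu2 : HasCompactSupport (fun x => c * W x) := by
      have : (fun x => c * W x) = (fun _ => c) * W := rfl
      rw [this]
      exact hWcs.mul_left
    have hu3 : tsupport (fun x => c * W x) ⊆ Ω := by
      refine subset_trans (closure_mono ?_) hWΩ
      intro x hx
      simp only [Function.mem_support] at hx ⊢
      intro h0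
      exact hx (by rw [h0, mul_zero])
    have hu4 : (∫ x in Ω, ‖gradient (fun x => c * W x) x‖ ^ p) ≤ 1 := by
      have hpt : ∀ x, ‖gradient (fun x => c * W x) x‖ ^ p = (J:ℝ)⁻¹ * ‖gradient W x‖ ^ p := by
        intro x
        rw [norm_gradient_eq, norm_gradient_eq, fderiv_const_mul (hWdiff x) c,
          norm_smul, Real.norm_eq_abs, abs_of_pos hcpos,
          Real.mul_rpow hcpos.le (norm_nonneg _), hcp]
      rw [show (fun x : EuclideanSpace ℝ (Fin N) => ‖gradient (fun x => c * W x) x‖ ^ p) =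
          fun x => (J:ℝ)⁻¹ * ‖gradient W x‖ ^ p from funext hpt, integral_const_mul]
      calc (J:ℝ)⁻¹ * ∫ x in Ω, ‖gradient W x‖ ^ p ≤ (J:ℝ)⁻¹ * (J:ℝ) := by
            have : (0:ℝ) ≤ (J:ℝ)⁻¹ := by positivity
            nlinarith [hWgrad]
        _ = 1 := inv_mul_cancel₀ hJ0.ne'
    have happ := hM _ hu1 hu2 hu3 hu4
    have hswap : (∫ x in Ω, α₂ x * (c * W x)) = c * ∫ x in Ω, α₂ x * W x := by
      rw [show (fun x : EuclideanSpace ℝ (Fin N) => α₂ x * (c * W x)) =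
          fun x => c * (α₂ x * W x) from funext (fun x => by ring), integral_const_mul]
    rw [hswap] at happ
    -- c * I ≤ M  ⇒  I ≤ M * J^(1/p)
    have hcinv : c⁻¹ = (J:ℝ)^(1/p) := by
      rw [hcdef, ← Real.rpow_neg hJ0.le, neg_neg]
    have hfin := (le_div_iff₀' hcpos).2 happ
    rwa [div_eq_mul_inv, hcinv] at hfin
  -- E3: pointwise comparison with W
  have hE3 : ∀ i, i < J → ∀ x, g i x ≤ W x + δ := by
    intro i hi x
    have h := ramp_le_Wfun hp hδ hσ hJ1 (v := fun i => vK (K i)) hi x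
    rw [hc₀] at h
    exact h
  -- pointwise sum bound (telescoping)
  have hptsum : ∀ x, (∑ i ∈ Finset.range J,
      (Ft α₂ (K i) x - Ft α₂ (K (i+1)) x) * g i x) ≤ α₂ x * W x + δ * α₂ x := by
    intro x
    have h1 : ∀ i ∈ Finset.range J, (Ft α₂ (K i) x - Ft α₂ (K (i+1)) x) * g i x
        ≤ (Ft α₂ (K i) x - Ft α₂ (K (i+1)) x) * (W x + δ) := by
      intro i hi
      have hd : 0 ≤ Ft α₂ (K i) x - Ft α₂ (K (i+1)) x :=
        sub_nonneg.2 (Ft_mono hpos (hKle i))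
      exact mul_le_mul_of_nonneg_left (hE3 i (Finset.mem_range.1 hi) x) hd
    have h2 : (∑ i ∈ Finset.range J, (Ft α₂ (K i) x - Ft α₂ (K (i+1)) x) * (W x + δ))
        = (Ft α₂ (K 0) x - Ft α₂ (K J) x) * (W x + δ) := by
      rw [← Finset.sum_mul, Finset.sum_range_sub' (fun i => Ft α₂ (K i) x)]
    have h3 : (Ft α₂ (K 0) x - Ft α₂ (K J) x) * (W x + δ) ≤ α₂ x * (W x + δ) := by
      have h4 : Ft α₂ (K 0) x - Ft α₂ (K J) x ≤ α₂ x := by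
        have h5 : (0:ℝ) ≤ Ft α₂ (K J) x := Ft_nonneg hpos
        have h6 : Ft α₂ (K 0) x ≤ α₂ x := Ft_le hpos
        linarith
      exact mul_le_mul_of_nonneg_right h4 (by linarith [hWnn x])
    calc (∑ i ∈ Finset.range J, (Ft α₂ (K i) x - Ft α₂ (K (i+1)) x) * g i x)
        ≤ _ := Finset.sum_le_sum h1
      _ = _ := h2
      _ ≤ α₂ x * (W x + δ) := h3
      _ = α₂ x * W x + δ * α₂ x := by ring
  -- integrabilities
  have hint_diff : ∀ i, Integrable
      (fun x => (Ft α₂ (K i) x - Ft α₂ (K (i+1)) x) * g i x) (volume.restrict Ω) := by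
    intro i
    have heq : (fun x => (Ft α₂ (K i) x - Ft α₂ (K (i+1)) x) * g i x) =
        fun x => Ft α₂ (K i) x * g i x - Ft α₂ (K (i+1)) x * g i x :=
      funext (fun x => by ring)
    rw [heq]
    exact (hint_g i (K i)).sub (hint_g i (K (i+1)))
  have hint_aW : Integrable (fun x => α₂ x * W x) (volume.restrict Ω) := by
    refine (hL1.const_mul CW).mono'
      (hL1.aestronglyMeasurable.mul hWc.continuous.aestronglyMeasurable) ?_
    filter_upwards with x
    rw [Real.norm_eq_abs, abs_mul, abs_of_nonneg (hpos x)]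
    have h7 : |W x| ≤ CW := by rw [← Real.norm_eq_abs]; exact hCW x
    calc α₂ x * |W x| ≤ α₂ x * CW := mul_le_mul_of_nonneg_left h7 (hpos x)
      _ = CW * α₂ x := mul_comm _ _
  -- put it together
  have hsum_eq : (∑ i ∈ Finset.range J, ((∫ x in Ω, Ft α₂ (K i) x * g i x)
      - ∫ x in Ω, Ft α₂ (K (i+1)) x * g i x))
      = ∫ x in Ω, (∑ i ∈ Finset.range J, (Ft α₂ (K i) x - Ft α₂ (K (i+1)) x) * g i x) := by
    rw [integral_finset_sum _ (fun i _ => hint_diff i)]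
    refine Finset.sum_congr rfl (fun i _ => ?_)
    rw [show (fun x => (Ft α₂ (K i) x - Ft α₂ (K (i+1)) x) * g i x) =
        fun x => Ft α₂ (K i) x * g i x - Ft α₂ (K (i+1)) x * g i x from
        funext (fun x => by ring),
      integral_sub (hint_g i (K i)) (hint_g i (K (i+1)))]
  have hlhs : (J:ℝ) * (ε/2) ≤ ∑ i ∈ Finset.range J, ((∫ x in Ω, Ft α₂ (K i) x * g i x)
      - ∫ x in Ω, Ft α₂ (K (i+1)) x * g i x) := by
    have h1 : ∀ i ∈ Finset.range J, ε/2 ≤ (∫ x in Ω, Ft α₂ (K i) x * g i x)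
        - ∫ x in Ω, Ft α₂ (K (i+1)) x * g i x := by
      intro i _
      have := hE1 i
      have := hE2 i
      linarith
    calc (J:ℝ)*(ε/2) = ∑ _i ∈ Finset.range J, ε/2 := by simp [mul_comm]
      _ ≤ _ := Finset.sum_le_sum h1
  have hrhs : (∫ x in Ω, (∑ i ∈ Finset.range J, (Ft α₂ (K i) x - Ft α₂ (K (i+1)) x) * g i x))
      ≤ (∫ x in Ω, α₂ x * W x) + δ * A := by
    have h1 : (∫ x in Ω, (∑ i ∈ Finset.range J, (Ft α₂ (K i) x - Ft α₂ (K (i+1)) x) * g i x))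
        ≤ ∫ x in Ω, (α₂ x * W x + δ * α₂ x) :=
      integral_mono (integrable_finset_sum _ (fun i _ => hint_diff i))
        (hint_aW.add (hL1.const_mul δ)) hptsum
    have h2 : (∫ x in Ω, (α₂ x * W x + δ * α₂ x)) = (∫ x in Ω, α₂ x * W x) + δ * A := by
      rw [integral_add hint_aW (hL1.const_mul δ), integral_const_mul, ← hAdef]
    linarith
  have hδA : δ * A ≤ ε/8 := by
    have hA1 : A + 1 ≠ 0 := by linarith
    have h14 : δ*(A+1) = ε/8 := by rw [hδdef]; field_simp
    nlinarith
  have hAex : (J:ℝ) * (ε/2) ≤ M * (J:ℝ)^(1/p) + ε/8 := by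
    calc (J:ℝ)*(ε/2) ≤ _ := hlhs
      _ = _ := hsum_eq
      _ ≤ (∫ x in Ω, α₂ x * W x) + δ * A := hrhs
      _ ≤ M * (J:ℝ)^(1/p) + ε/8 := by linarith [hIaW]
  -- final arithmetic contradiction
  have hBD : (J:ℝ) = (J:ℝ)^(1-1/p) * (J:ℝ)^(1/p) := by
    rw [← Real.rpow_add hJ0]
    norm_num
  have hBe : (M + ε/8 + 1) < (J:ℝ)^(1-1/p) * (ε/2) := by
    rw [div_lt_iff₀ hε] at hJbig
    linarith
  have hcontr : M * (J:ℝ)^(1/p) + ε/8 < (J:ℝ) * (ε/2) := by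
    calc M * (J:ℝ)^(1/p) + ε/8 ≤ M * (J:ℝ)^(1/p) + (ε/8 + 1) * (J:ℝ)^(1/p) := by nlinarith
      _ = (M + ε/8 + 1) * (J:ℝ)^(1/p) := by ring
      _ < ((J:ℝ)^(1-1/p) * (ε/2)) * (J:ℝ)^(1/p) := mul_lt_mul_of_pos_right hBe hJppos
      _ = ((J:ℝ)^(1-1/p) * (J:ℝ)^(1/p)) * (ε/2) := by ring
      _ = (J:ℝ) * (ε/2) := by rw [← hBD]
  linarith




end DNTZ

theorem dualNorm_truncation_tendsto_zero {N : ℕ} (p : ℝ) (hp : 1 < p) (hpN : p ≤ N)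
    (Ω : Set (EuclideanSpace ℝ (Fin N))) (hΩo : IsOpen Ω) (hΩb : Bornology.IsBounded Ω)
    (α₂ : EuclideanSpace ℝ (Fin N) → ℝ)
    (hpos : ∀ x, 0 ≤ α₂ x)
    -- `α₂ ∈ L¹(Ω)`
    (hL1 : Integrable α₂ (volume.restrict Ω))
    -- `α₂ ∈ W^{-1,p'}(Ω)`: its action on test functions is bounded in the dual norm
    (hdual : ∃ M : ℝ, ∀ v : EuclideanSpace ℝ (Fin N) → ℝ,
      ContDiff ℝ (⊤ : ℕ∞) v → HasCompactSupport v → tsupport v ⊆ Ω →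
      (∫ x in Ω, ‖gradient v x‖ ^ p) ≤ 1 → (∫ x in Ω, α₂ x * v x) ≤ M) :
    Tendsto (fun k : ℝ =>
        dualNorm p Ω (fun x => if k ≤ α₂ x then α₂ x else 0))
      atTop (nhds 0) := by
  classical
  obtain ⟨M, hM⟩ := hdual
  rw [Metric.tendsto_atTop]
  intro ε hε
  obtain ⟨K, hK⟩ := DNTZ.main_bound hp hpos hL1 hM (half_pos hε)
  refine ⟨K, fun k hk => ?_⟩
  rw [Real.dist_eq, sub_zero]
  have h0mem : (0:ℝ) ∈ {r : ℝ | ∃ v : EuclideanSpace ℝ (Fin N) → ℝ,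
      ContDiff ℝ (⊤ : ℕ∞) v ∧ HasCompactSupport v ∧ tsupport v ⊆ Ω ∧
      (∫ x in Ω, ‖gradient v x‖ ^ p) ≤ 1 ∧
      r = ∫ x in Ω, (if k ≤ α₂ x then α₂ x else 0) * v x} := by
    obtain ⟨h1, h2, h3, h4⟩ := DNTZ.zero_admissible (F := EuclideanSpace ℝ (Fin N)) hp Ω
    exact ⟨(fun _ => 0), h1, h2, h3, h4, by simp⟩
  have hub : ∀ r ∈ {r : ℝ | ∃ v : EuclideanSpace ℝ (Fin N) → ℝ,
      ContDiff ℝ (⊤ : ℕ∞) v ∧ HasCompactSupport v ∧ tsupport v ⊆ Ω ∧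
      (∫ x in Ω, ‖gradient v x‖ ^ p) ≤ 1 ∧
      r = ∫ x in Ω, (if k ≤ α₂ x then α₂ x else 0) * v x}, r ≤ ε/2 := by
    rintro r ⟨v, hv1, hv2, hv3, hv4, rfl⟩
    simp only [DNTZ.Ft_eq]
    obtain ⟨C, hC⟩ := hv2.exists_bound_of_continuous hv1.continuous
    have hCb : ∀ x, |v x| ≤ max C 0 := fun x => le_trans (hC x) (le_max_left _ _)
    have hint1 : Integrable (fun x => DNTZ.Ft α₂ k x * v x) (volume.restrict Ω) :=
      DNTZ.Ft_mul_int hpos hL1 hv1.continuous.aestronglyMeasurable hCb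
    have hint2 : Integrable (fun x => DNTZ.Ft α₂ K x * max (v x) 0) (volume.restrict Ω) := by
      refine DNTZ.Ft_mul_int hpos hL1
        ((hv1.continuous.max continuous_const).aestronglyMeasurable) (C := max C 0) (fun x => ?_)
      rcases le_total (v x) 0 with h | h
      · rw [max_eq_right h, abs_zero]; exact le_max_right _ _
      · rw [max_eq_left h, abs_of_nonneg h]
        exact le_trans (le_abs_self _) (hCb x)
    have hpw : ∀ x, DNTZ.Ft α₂ k x * v x ≤ DNTZ.Ft α₂ K x * max (v x) 0 := by
      intro x
      calc DNTZ.Ft α₂ k x * v x ≤ DNTZ.Ft α₂ k x * max (v x) 0 :=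
            mul_le_mul_of_nonneg_left (le_max_left _ _) (DNTZ.Ft_nonneg hpos)
        _ ≤ DNTZ.Ft α₂ K x * max (v x) 0 :=
            mul_le_mul_of_nonneg_right (DNTZ.Ft_mono hpos hk) (le_max_right _ _)
    refine le_trans (integral_mono hint1 hint2 hpw) ?_
    have := hK v hv1 hv2 hv3 hv4
    simpa only [DNTZ.Ft_eq] using this
  have hle : dualNorm p Ω (fun x => if k ≤ α₂ x then α₂ x else 0) ≤ ε/2 :=
    Real.sSup_le hub (by linarith)
  have hge : 0 ≤ dualNorm p Ω (fun x => if k ≤ α₂ x then α₂ x else 0) := by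
    by_cases hbdd : BddAbove {r : ℝ | ∃ v : EuclideanSpace ℝ (Fin N) → ℝ,
        ContDiff ℝ (⊤ : ℕ∞) v ∧ HasCompactSupport v ∧ tsupport v ⊆ Ω ∧
        (∫ x in Ω, ‖gradient v x‖ ^ p) ≤ 1 ∧
        r = ∫ x in Ω, (if k ≤ α₂ x then α₂ x else 0) * v x}
    · exact le_csSup hbdd h0mem
    · rw [dualNorm, Real.sSup_of_not_bddAbove hbdd]
  rw [abs_of_nonneg hge]
  linarith

end
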